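/- Let h_SB, h_SC, h_CB, h_CD, p_S, σ_C² > 0, β ≥ 0, λ ∈ [0,1], and set a = σ_D²·h_SC·h_CB·p_S > 0 with σ_D² > 0, and v(p) = β·p^λ + σ_C². Then the function p ↦ (h_CD·h_CB·p·v(p) − a)/(h_SB·h_CD·p_S·v(p) + a) is strictly increasing on (0, +∞). Consequently, the function R_B(ᾱ(p), p) = log₂(1 + (h_CD·h_CB·p·(β·p^λ + σ_C²) − σ_D²·h_SC·h_CB·p_S)/(h_SB·h_CD·p_S·(β·p^λ + σ_C²) + σ_D²·h_SC·h_CB·p_S)) is strictly increasing on the set of p > 0 where its logarithm argument is at least 1. -/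
import Mathlib


open Set Real

/-- the rational function defining `R_B(ᾱ(p), p)` is strictly
increasing on `(0, ∞)`; hence `R_B(ᾱ(p), p)` is strictly increasing on the set of
positive `p` where the logarithm argument is at least `1`. -/
theorem RB_alphabar_strictMono
    (hSB hSC hCB hCD pS σC2 σD2 β lam : ℝ)
    (hhSB : 0 < hSB) (hhSC : 0 < hSC) (hhCB : 0 < hCB) (hhCD : 0 < hCD)
    (hpS : 0 < pS) (hσC : 0 < σC2) (hσD : 0 < σD2)
    (hβ : 0 ≤ β) (hlam : lam ∈ Icc (0 : ℝ) 1) :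
    let a : ℝ := σD2 * hSC * hCB * pS
    let v : ℝ → ℝ := fun p => β * p ^ lam + σC2
    let r : ℝ → ℝ := fun p =>
      (hCD * hCB * p * v p - a) / (hSB * hCD * pS * v p + a)
    0 < a ∧
    StrictMonoOn r (Ioi 0) ∧
    StrictMonoOn (fun p => logb 2 (1 + r p)) {p : ℝ | 0 < p ∧ 1 ≤ 1 + r p} := by
  intro a v r
  have ha : 0 < a := by positivity
  have hv : ∀ p : ℝ, 0 < p → 0 < v p := by
    intro p hp
    have : 0 ≤ β * p ^ lam := mul_nonneg hβ (Real.rpow_nonneg hp.le _)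
    simp only [v]; linarith
  have hmono : StrictMonoOn r (Ioi 0) := by
    intro p hp q hq hpq
    have hp' : (0:ℝ) < p := hp
    have hq' : (0:ℝ) < q := hq
    have hvp := hv p hp'
    have hvq := hv q hq'
    have hvle : v p ≤ v q := by
      have := Real.rpow_le_rpow hp'.le hpq.le hlam.1
      simp only [v]; nlinarith
    have h1 : p * v p < q * v q :=
      lt_of_lt_of_le (mul_lt_mul_of_pos_right hpq hvp)
        (mul_le_mul_of_nonneg_left hvle hq'.le)
    have hden1 : 0 < hSB * hCD * pS * v p + a := by positivity
    have hden2 : 0 < hSB * hCD * pS * v q + a := by positivity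
    simp only [r]
    rw [div_lt_div_iff₀ hden1 hden2]
    nlinarith [mul_pos (mul_pos (mul_pos hhCD hhCB) (mul_pos (mul_pos hhSB hhCD) hpS))
        (mul_pos (mul_pos hvp hvq) (sub_pos.2 hpq)),
      mul_pos ha (mul_pos (mul_pos hhCD hhCB) (sub_pos.2 h1)),
      mul_nonneg (mul_nonneg ha.le (mul_pos (mul_pos hhSB hhCD) hpS).le)
        (sub_nonneg.2 hvle)]
  refine ⟨ha, hmono, ?_⟩
  intro p hp q hq hpq
  have hr : r p < r q := hmono hp.1 hq.1 hpq
  have hpos : (0:ℝ) < 1 + r p := lt_of_lt_of_le one_pos hp.2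
  exact Real.logb_lt_logb one_lt_two hpos (by linarith)
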